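/- Let k be an integer with 1 ≤ k ≤ 11 and set D = k / gcd(12, k). For any positive integer m with k*m ≡ k (mod 12), one has gcd(m, k*(m-1)/12) = gcd(m, D). -/

import Mathlib

/-- For 1 ≤ k ≤ 11, D = k/gcd(12,k) and km ≡ k (mod 12),
gcd(m, k(m-1)/12) = gcd(m, D). -/
theorem gcd_with_D (k : ℤ) (hk1 : 1 ≤ k) (hk11 : k ≤ 11) (m : ℤ) (hm : 0 < m)
    (hcong : (12 : ℤ) ∣ k * (m - 1)) :
    Int.gcd m (k * (m - 1) / 12) = Int.gcd m (k / (Int.gcd 12 k : ℤ)) := by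
  set g : ℤ := (Int.gcd 12 k : ℤ) with hg
  have hgpos : 0 < Int.gcd 12 k := Int.gcd_pos_of_ne_zero_left k (by norm_num)
  have hg0 : g ≠ 0 := by positivity
  have hgk : g ∣ k := Int.gcd_dvd_right _ _
  have hg12 : g ∣ (12 : ℤ) := Int.gcd_dvd_left _ _
  set D : ℤ := k / g with hD
  set t : ℤ := 12 / g with ht
  have hkD : k = g * D := (Int.mul_ediv_cancel' hgk).symm
  have h12t : (12 : ℤ) = g * t := (Int.mul_ediv_cancel' hg12).symm
  have hcop : Int.gcd t D = 1 := Int.gcd_div_gcd_div_gcd hgpos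
  -- t ∣ m - 1
  have htD : t ∣ D * (m - 1) := by
    rcases hcong with ⟨c, hc⟩
    refine ⟨c, ?_⟩
    have : g * (D * (m - 1)) = g * (t * c) := by
      rw [← mul_assoc, ← hkD, ← mul_assoc, ← h12t]; exact hc
    exact mul_left_cancel₀ hg0 this
  have htm : t ∣ m - 1 := by
    have hco : IsCoprime t D := Int.isCoprime_iff_gcd_eq_one.mpr hcop
    exact hco.dvd_of_dvd_mul_left htD
  set s : ℤ := (m - 1) / t with hs
  have hms : m - 1 = t * s := (Int.mul_ediv_cancel' htm).symm
  have hkey : k * (m - 1) / 12 = D * s := by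
    have : k * (m - 1) = 12 * (D * s) := by
      rw [hkD, hms, h12t]; ring
    rw [this, Int.mul_ediv_cancel_left _ (by norm_num : (12:ℤ) ≠ 0)]
  have hcopsm : Nat.Coprime s.natAbs m.natAbs := by
    have hdvd : (Int.gcd s m : ℤ) ∣ 1 := by
      have h1 : (Int.gcd s m : ℤ) ∣ s := Int.gcd_dvd_left _ _
      have h2 : (Int.gcd s m : ℤ) ∣ m := Int.gcd_dvd_right _ _
      have : m - t * s = 1 := by omega
      calc (Int.gcd s m : ℤ) ∣ m - t * s := dvd_sub h2 (Dvd.dvd.mul_left h1 t)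
        _ = 1 := this
    have := Int.eq_one_of_dvd_one (by positivity) hdvd
    exact_mod_cast this
  rw [hkey]
  show (m.gcd (D * s)) = m.gcd D
  rw [Int.gcd, Int.natAbs_mul]
  exact hcopsm.gcd_mul_right_cancel_right D.natAbs
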